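/- Let U and Y be integrable random variables on a probability space whose moment generating functions M_U(s) = E[e^{sU}] and M_Y(s) = E[e^{sY}] are finite for all s in a neighborhood of 0, let β > E[Y], let a > 0 and c ∈ ℝ, and let α : ℝ → ℝ be differentiable at 0 with α(0) = 0 and satisfy α(r)·β + M_U(r)·M_Y(−α(r)) − 1 = 0 for all r in a neighborhood of 0. Define θ(r) = −c·r − α(r)·β·a. Then θ(0) = 0 and θ'(0) = −c + aβ·E[U]/(β − E[Y]); in particular, if the net profit condition c > aβ·E[U]/(β − E[Y]) holds, then θ'(0) < 0. -/

import Mathlib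

open MeasureTheory ProbabilityTheory Real

lemma hasDerivAt_mgf_zero
    {Ω : Type*} [MeasurableSpace Ω] (P : Measure Ω) [IsProbabilityMeasure P]
    (X : Ω → ℝ) (hXmeas : Measurable X)
    (hfin : ∀ᶠ s in nhds (0 : ℝ), Integrable (fun ω => Real.exp (s * X ω)) P) :
    HasDerivAt (mgf X P) (∫ ω, X ω ∂P) 0 := by
  obtain ⟨ε, hε, hεset⟩ := Metric.eventually_nhds_iff.1 hfin
  set δ := ε / 2 with hδdef
  have hδ : 0 < δ := by positivity
  have hδε : ∀ s : ℝ, |s| ≤ δ → Integrable (fun ω => Real.exp (s * X ω)) P := by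
    intro s hs
    apply hεset
    simp only [dist_zero_right, Real.norm_eq_abs]
    calc |s| ≤ δ := hs
      _ < ε := by rw [hδdef]; linarith
  have hint_pos := hδε δ (by rw [abs_of_pos hδ])
  have hint_neg := hδε (-δ) (by rw [abs_neg, abs_of_pos hδ])
  set bound : Ω → ℝ := fun ω => (2 / δ) * (Real.exp (δ * X ω) + Real.exp (-δ * X ω))
    with hbound_def
  have key := hasDerivAt_integral_of_dominated_loc_of_deriv_le (μ := P)
    (F := fun s ω => Real.exp (s * X ω)) (F' := fun s ω => X ω * Real.exp (s * X ω))
    (x₀ := (0 : ℝ)) (bound := bound) (s := Metric.ball 0 (δ / 2)) (Metric.ball_mem_nhds _ (by positivity))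
    (Filter.Eventually.of_forall fun s =>
      ((measurable_const.mul hXmeas).exp).aestronglyMeasurable)
    (by simpa using hδε 0 (by simp [le_of_lt hδ]))
    ((hXmeas.mul (measurable_const.mul hXmeas).exp).aestronglyMeasurable)
    ?_ ?_ ?_
  · have := key.2
    have heq : (fun s => ∫ ω, Real.exp (s * X ω) ∂P) = mgf X P := rfl
    rw [heq] at this
    simpa using this
  · refine Filter.Eventually.of_forall fun ω => fun s hs => ?_
    simp only [Metric.mem_ball, dist_zero_right, Real.norm_eq_abs] at hs
    have h1 : |X ω| ≤ (2 / δ) * Real.exp (δ / 2 * |X ω|) := by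
      have := Real.add_one_le_exp (δ / 2 * |X ω|)
      have h2 : δ / 2 * |X ω| ≤ Real.exp (δ / 2 * |X ω|) := by
        nlinarith [abs_nonneg (X ω), Real.exp_pos (δ / 2 * |X ω|)]
      calc |X ω| = (2 / δ) * (δ / 2 * |X ω|) := by field_simp
        _ ≤ (2 / δ) * Real.exp (δ / 2 * |X ω|) := by
            apply mul_le_mul_of_nonneg_left h2; positivity
    have h2 : Real.exp (s * X ω) ≤ Real.exp (δ / 2 * |X ω|) := by
      apply Real.exp_le_exp.2
      calc s * X ω ≤ |s * X ω| := le_abs_self _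
        _ = |s| * |X ω| := abs_mul _ _
        _ ≤ δ / 2 * |X ω| := by
            apply mul_le_mul_of_nonneg_right (le_of_lt hs) (abs_nonneg _)
    have h3 : Real.exp (δ * |X ω|) ≤ Real.exp (δ * X ω) + Real.exp (-δ * X ω) := by
      rcases abs_choice (X ω) with h | h
      · rw [h]; nlinarith [Real.exp_pos (-δ * X ω)]
      · rw [h]; rw [show δ * -X ω = -δ * X ω by ring]
        nlinarith [Real.exp_pos (δ * X ω)]
    calc ‖X ω * Real.exp (s * X ω)‖ = |X ω| * Real.exp (s * X ω) := by
          rw [Real.norm_eq_abs, abs_mul, abs_of_pos (Real.exp_pos _)]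
      _ ≤ (2 / δ) * Real.exp (δ / 2 * |X ω|) * Real.exp (δ / 2 * |X ω|) := by
          apply mul_le_mul h1 h2 (le_of_lt (Real.exp_pos _)); positivity
      _ = (2 / δ) * Real.exp (δ * |X ω|) := by
          rw [mul_assoc, ← Real.exp_add]; ring_nf
      _ ≤ bound ω := by
          rw [hbound_def]
          apply mul_le_mul_of_nonneg_left h3; positivity
  · exact (hint_pos.add hint_neg).const_mul _
  · refine Filter.Eventually.of_forall fun ω => fun s _ => ?_
    have : HasDerivAt (fun s : ℝ => s * X ω) (X ω) s := by
      simpa using (hasDerivAt_id s).mul_const (X ω)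
    simpa [mul_comm] using this.exp

/-- With `θ(r) = −cr − α(r)βa`, where `α` solves the Lundberg identity near `0` with
`α(0) = 0`, one has `θ(0) = 0` and `θ'(0) = −c + aβ E[U]/(β − E[Y])`; in particular the
net profit condition `c > aβ E[U]/(β − E[Y])` forces `θ'(0) < 0`. -/
theorem theta_derivative_at_zero
    {Ω : Type*} [MeasurableSpace Ω] (P : Measure Ω) [IsProbabilityMeasure P]
    (U Y : Ω → ℝ) (hUmeas : Measurable U) (hYmeas : Measurable Y)
    (hUint : Integrable U P) (hYint : Integrable Y P)
    (hUfin : ∀ᶠ s in nhds (0 : ℝ), Integrable (fun ω => Real.exp (s * U ω)) P)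
    (hYfin : ∀ᶠ s in nhds (0 : ℝ), Integrable (fun ω => Real.exp (s * Y ω)) P)
    (β : ℝ) (hβ : ∫ ω, Y ω ∂P < β)
    (a : ℝ) (ha : 0 < a) (c : ℝ)
    (α : ℝ → ℝ) (hα : DifferentiableAt ℝ α 0) (hα0 : α 0 = 0)
    (hid : ∀ᶠ r in nhds (0 : ℝ), α r * β + mgf U P r * mgf Y P (-(α r)) - 1 = 0)
    (θ : ℝ → ℝ) (hθ : ∀ r, θ r = -c * r - α r * β * a) :
    θ 0 = 0 ∧
    deriv θ 0 = -c + a * β * (∫ ω, U ω ∂P) / (β - ∫ ω, Y ω ∂P) ∧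
    (a * β * (∫ ω, U ω ∂P) / (β - ∫ ω, Y ω ∂P) < c → deriv θ 0 < 0) := by
  set EU := ∫ ω, U ω ∂P with hEUdef
  set EY := ∫ ω, Y ω ∂P with hEYdef
  have hEU := hasDerivAt_mgf_zero P U hUmeas hUfin
  have hEY := hasDerivAt_mgf_zero P Y hYmeas hYfin
  set α' := deriv α 0 with hα'def
  have hαd : HasDerivAt α α' 0 := hα.hasDerivAt
  have hinner : HasDerivAt (fun r => -(α r)) (-α') 0 := hαd.neg
  have hEY0 : HasDerivAt (mgf Y P) EY ((fun r => -(α r)) 0) := by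
    simpa [hα0] using hEY
  have hG : HasDerivAt (fun r => mgf Y P (-(α r))) (EY * (-α')) 0 :=
    by have := HasDerivAt.comp 0 hEY0 hinner; exact this
  have hF : HasDerivAt (fun r => α r * β + mgf U P r * mgf Y P (-(α r)) - 1)
      (α' * β + (EU * mgf Y P (-(α 0)) + mgf U P 0 * (EY * (-α')))) 0 :=
    ((hαd.mul_const β).add (hEU.mul hG)).sub_const 1
  have hDzero : α' * β + (EU * 1 + 1 * (EY * (-α'))) = 0 := by
    have h1 : deriv (fun r => α r * β + mgf U P r * mgf Y P (-(α r)) - 1) 0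
        = deriv (fun _ : ℝ => (0 : ℝ)) 0 := Filter.EventuallyEq.deriv_eq hid
    rw [hF.deriv] at h1
    simp only [deriv_const] at h1
    rw [hα0, neg_zero, mgf_zero, mgf_zero] at h1
    exact h1
  have hβne : β - EY ≠ 0 := by linarith
  have hα'val : α' = -EU / (β - EY) := by
    field_simp
    linarith [hDzero]
  have hθfun : θ = fun r => -c * r - α r * β * a := funext hθ
  have hθd : HasDerivAt θ (-c - α' * β * a) 0 := by
    rw [hθfun]
    have h1 : HasDerivAt (fun r : ℝ => -c * r) (-c) 0 := by
      simpa using (hasDerivAt_id (0 : ℝ)).const_mul (-c)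
    exact h1.sub ((hαd.mul_const β).mul_const a)
  have hderiv : deriv θ 0 = -c + a * β * EU / (β - EY) := by
    rw [hθd.deriv, hα'val]
    field_simp
    ring
  refine ⟨by simp [hθ 0, hα0], hderiv, fun h => ?_⟩
  rw [hderiv]; linarith
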